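/- Let (p₀, {T_u}_{u∈U}) be given, where {T_u} is a family of substochastic matrices and p₀ a probability vector, and assume φ : X → Z is surjective. Then there exists an entrance matrix Σ ∈ ℝ^{X×Z} making (p₀, {T_u}) quasi-Markov if and only if for every z ∈ Z the entrance space ς_z has dimension at most 1. -/

import Mathlib

noncomputable section

/-- The feature matrix `Φ ∈ ℝ^{Z×X}`, `Φ_{z,x} = [φ(x) = z]`. -/
def featMat {X Z : Type*} [DecidableEq Z] (φ : X → Z) : Matrix Z X ℝ :=
  Matrix.of fun z x => if φ x = z then 1 else 0

/-- The projection `Π_z ∈ ℝ^{X×X}` onto the states with feature `z`. -/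
def proj {X Z : Type*} [DecidableEq X] [DecidableEq Z] (φ : X → Z) (z : Z) :
    Matrix X X ℝ :=
  Matrix.diagonal fun x => if φ x = z then 1 else 0

/-- The complementary projection `Π_z^⊥ := I − Π_z`. -/
def projPerp {X Z : Type*} [DecidableEq X] [DecidableEq Z] (φ : X → Z) (z : Z) :
    Matrix X X ℝ :=
  1 - proj φ z

/-- A vector with nonnegative entries summing to 1. -/
def IsProbVec {X : Type*} [Fintype X] (v : X → ℝ) : Prop :=
  (∀ x, 0 ≤ v x) ∧ ∑ x, v x = 1

/-- A matrix with nonnegative entries whose columns each sum to at most 1. -/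
def IsSubstochastic {X : Type*} [Fintype X] (M : Matrix X X ℝ) : Prop :=
  (∀ x' x, 0 ≤ M x' x) ∧ ∀ x, ∑ x', M x' x ≤ 1

/-- `(p₀, {T_u})` is quasi-Markov with entrance matrix `Σ`. -/
def IsQuasiMarkov {X Z U : Type*} [Fintype X] [Fintype Z] [DecidableEq X] [DecidableEq Z]
    (φ : X → Z) (T : U → Matrix X X ℝ) (p₀ : X → ℝ) (S : Matrix X Z ℝ) : Prop :=
  (∀ z, IsProbVec (fun x => S x z) ∧
    (proj φ z).mulVec (fun x => S x z) = fun x => S x z) ∧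
  p₀ = (S * featMat φ).mulVec p₀ ∧
  ∀ z u, proj φ z * T u * projPerp φ z = proj φ z * (S * featMat φ) * T u * projPerp φ z

/-- The entrance space `ς_z := Σ_u range(Π_z T_u Π_z^⊥) + span{Π_z p₀}`. -/
def entranceSpace {X Z U : Type*} [Fintype X] [DecidableEq X] [DecidableEq Z]
    (φ : X → Z) (T : U → Matrix X X ℝ) (p₀ : X → ℝ) (z : Z) : Submodule ℝ (X → ℝ) :=
  (⨆ u : U, LinearMap.range (proj φ z * T u * projPerp φ z).mulVecLin) ⊔
    Submodule.span ℝ {(proj φ z).mulVec p₀}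

section QMhelpers

set_option linter.unusedSectionVars false

variable {X Z U : Type*} [Fintype X] [Fintype Z] [Fintype U] [DecidableEq X] [DecidableEq Z]
  (φ : X → Z)

lemma proj_mulVec (z : Z) (v : X → ℝ) (x : X) :
    (proj φ z).mulVec v x = if φ x = z then v x else 0 := by
  simp [proj, Matrix.mulVec_diagonal, ite_mul]

lemma projPerp_eq (z : Z) :
    projPerp φ z = Matrix.diagonal (fun x => if φ x = z then 0 else 1) := by
  ext x x'
  rcases eq_or_ne x x' with rfl | hxx
  · simp only [projPerp, proj, Matrix.sub_apply, Matrix.one_apply_eq, Matrix.diagonal_apply_eq]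
    split <;> norm_num
  · simp [projPerp, proj, Matrix.one_apply, Matrix.diagonal_apply, hxx]

lemma triple_apply (z : Z) (T : Matrix X X ℝ) (x' x : X) :
    (proj φ z * T * projPerp φ z) x' x
      = (if φ x' = z then 1 else 0) * (T x' x * (if φ x = z then 0 else 1)) := by
  rw [mul_assoc, projPerp_eq, proj, Matrix.diagonal_mul, Matrix.mul_diagonal]

lemma featMul_apply (S : Matrix X Z ℝ) (x : X) (x' : X) :
    (S * featMat φ) x x' = S x (φ x') := by
  simp only [Matrix.mul_apply, featMat, Matrix.of_apply, mul_ite, mul_one, mul_zero]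
  rw [Finset.sum_ite_eq]
  simp

lemma key_mulVec (S : Matrix X Z ℝ) (hS : ∀ z x, φ x ≠ z → S x z = 0)
    (z : Z) (v : X → ℝ) :
    ((proj φ z) * (S * featMat φ)).mulVec v
      = (∑ x' ∈ Finset.univ.filter (fun x' => φ x' = z), v x') • (fun x => S x z) := by
  funext x
  rw [← Matrix.mulVec_mulVec, proj_mulVec]
  by_cases hx : φ x = z
  · simp only [hx, if_true, Pi.smul_apply, smul_eq_mul]
    have h1 : (S * featMat φ).mulVec v x = ∑ x', S x (φ x') * v x' := by
      simp only [Matrix.mulVec, dotProduct]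
      exact Finset.sum_congr rfl fun x' _ => by rw [featMul_apply]
    have h2 : ∀ x' : X, S x (φ x') * v x' = if φ x' = z then v x' * S x z else 0 := by
      intro x'
      by_cases h : φ x' = z
      · rw [if_pos h, h]; ring
      · rw [if_neg h, hS (φ x') x (fun hh => h (hh ▸ hx)), zero_mul]
    rw [h1]
    calc ∑ x', S x (φ x') * v x'
        = ∑ x', if φ x' = z then v x' * S x z else 0 :=
          Finset.sum_congr rfl fun x' _ => h2 x'
      _ = _ := by rw [← Finset.sum_filter, ← Finset.sum_mul]
  · simp only [hx, if_false, Pi.smul_apply, smul_eq_mul]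
    rw [hS z x hx, mul_zero]

/-- The subspace of vectors supported on `φ⁻¹(z)`. -/
def suppSpace (z : Z) : Submodule ℝ (X → ℝ) where
  carrier := {v | ∀ x, φ x ≠ z → v x = 0}
  zero_mem' := fun x _ => rfl
  add_mem' := by intro a b ha hb x hx; simp [ha x hx, hb x hx]
  smul_mem' := by intro c v hv x hx; simp [hv x hx]

lemma projp0_mem (T : U → Matrix X X ℝ) (p₀ : X → ℝ) (z : Z) :
    (proj φ z).mulVec p₀ ∈ entranceSpace φ T p₀ z :=
  Submodule.mem_sup_right (Submodule.mem_span_singleton_self _)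

lemma col_mem (T : U → Matrix X X ℝ) (p₀ : X → ℝ) (z : Z) (u : U) (x : X) :
    (fun x' => (proj φ z * T u * projPerp φ z) x' x) ∈ entranceSpace φ T p₀ z := by
  refine Submodule.mem_sup_left (Submodule.mem_iSup_of_mem u ⟨Pi.single x 1, ?_⟩)
  ext x'
  simp only [Matrix.mulVecLin_apply, Matrix.mulVec_single, mul_one, Pi.smul_apply,
    MulOpposite.op_one, one_smul, Matrix.col_apply]

lemma entrance_le_suppSpace (T : U → Matrix X X ℝ) (p₀ : X → ℝ) (z : Z) :
    entranceSpace φ T p₀ z ≤ suppSpace φ z := by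
  refine sup_le (iSup_le fun u => ?_) ?_
  · rintro _ ⟨v, rfl⟩ x hx
    rw [Matrix.mulVecLin_apply, mul_assoc, ← Matrix.mulVec_mulVec, proj_mulVec, if_neg hx]
  · rw [Submodule.span_le, Set.singleton_subset_iff]
    intro x hx
    rw [proj_mulVec, if_neg hx]

lemma eq_smul_of_mem_span {σ : X → ℝ} (hσ : ∑ x, σ x = 1) {w : X → ℝ}
    (hw : w ∈ Submodule.span ℝ {σ}) : w = (∑ x, w x) • σ := by
  obtain ⟨a, rfl⟩ := Submodule.mem_span_singleton.mp hw
  congr 1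
  simp only [Pi.smul_apply, smul_eq_mul, ← Finset.mul_sum, hσ, mul_one]

lemma sum_proj_mulVec (z : Z) (w : X → ℝ) :
    ∑ x, (proj φ z).mulVec w x = ∑ x ∈ Finset.univ.filter (fun x => φ x = z), w x := by
  rw [Finset.sum_filter]
  exact Finset.sum_congr rfl fun x _ => proj_mulVec φ z w x

end QMhelpers

/-- Lemma B.1 (lem:dim): a quasi-Markov entrance matrix exists iff every
entrance space has dimension at most 1. -/
theorem quasiMarkov_iff_entrance_dim_le_one
    {X Z U : Type*} [Fintype X] [Fintype Z] [Fintype U] [DecidableEq X] [DecidableEq Z]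
    (φ : X → Z) (hφ : Function.Surjective φ)
    (T : U → Matrix X X ℝ) (hT : ∀ u, IsSubstochastic (T u))
    (p₀ : X → ℝ) (hp₀ : IsProbVec p₀) :
    (∃ S : Matrix X Z ℝ, IsQuasiMarkov φ T p₀ S) ↔
      ∀ z : Z, Module.finrank ℝ (entranceSpace φ T p₀ z) ≤ 1 := by
  constructor
  · rintro ⟨S, hcols, hp, hTeq⟩ z
    have hsupp : ∀ z' x, φ x ≠ z' → S x z' = 0 := by
      intro z' x hx
      have h := congrFun (hcols z').2 x
      rw [proj_mulVec, if_neg hx] at h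
      exact h.symm
    have hle : entranceSpace φ T p₀ z ≤ Submodule.span ℝ {fun x => S x z} := by
      refine sup_le (iSup_le fun u => ?_) ?_
      · rintro _ ⟨v, rfl⟩
        rw [Matrix.mulVecLin_apply, hTeq z u, mul_assoc, ← Matrix.mulVec_mulVec,
          key_mulVec φ S hsupp]
        exact Submodule.smul_mem _ _ (Submodule.mem_span_singleton_self _)
      · rw [Submodule.span_le, Set.singleton_subset_iff]
        rw [hp, Matrix.mulVec_mulVec, key_mulVec φ S hsupp]
        exact Submodule.smul_mem _ _ (Submodule.mem_span_singleton_self _)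
    have hσne : (fun x => S x z) ≠ 0 := by
      intro h
      have h1 : ∑ x, S x z = 1 := (hcols z).1.2
      rw [Finset.sum_congr rfl (fun x _ => congrFun h x)] at h1
      simp at h1
    calc Module.finrank ℝ (entranceSpace φ T p₀ z)
        ≤ Module.finrank ℝ (Submodule.span ℝ {fun x => S x z}) := Submodule.finrank_mono hle
      _ = 1 := finrank_span_singleton hσne
  · intro hdim
    have hex : ∀ z : Z, ∃ σz : X → ℝ, IsProbVec σz ∧ (∀ x, φ x ≠ z → σz x = 0) ∧
        entranceSpace φ T p₀ z ≤ Submodule.span ℝ {σz} := by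
      intro z
      by_cases hbot : entranceSpace φ T p₀ z = ⊥
      · obtain ⟨x₀, hx₀⟩ := hφ z
        refine ⟨Pi.single x₀ 1, ⟨fun x => ?_, ?_⟩, fun x hx => ?_, hbot ▸ bot_le⟩
        · rw [Pi.single_apply]; split <;> norm_num
        · simp
        · have hne : x ≠ x₀ := fun h => hx (by rw [h, hx₀])
          rw [Pi.single_apply, if_neg hne]
      · have hw : ∃ w ∈ entranceSpace φ T p₀ z, w ≠ 0 ∧ ∀ x, 0 ≤ w x := by
          by_cases hpz : (proj φ z).mulVec p₀ = 0
          · by_cases hM : ∀ u, proj φ z * T u * projPerp φ z = 0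
            · exfalso
              apply hbot
              rw [entranceSpace, hpz]
              simp [hM, Matrix.mulVecLin_zero]
            · push_neg at hM
              obtain ⟨u, hu⟩ := hM
              have hex2 : ∃ x x', (proj φ z * T u * projPerp φ z) x' x ≠ 0 := by
                by_contra h
                push_neg at h
                exact hu (Matrix.ext fun x' x => h x x')
              obtain ⟨x, x', hxx⟩ := hex2
              refine ⟨fun x'' => (proj φ z * T u * projPerp φ z) x'' x,
                col_mem φ T p₀ z u x, fun h => hxx (congrFun h x'), fun x'' => ?_⟩
              show 0 ≤ (proj φ z * T u * projPerp φ z) x'' x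
              rw [triple_apply]
              refine mul_nonneg (by split <;> norm_num)
                (mul_nonneg ((hT u).1 x'' x) (by split <;> norm_num))
          · refine ⟨(proj φ z).mulVec p₀, projp0_mem φ T p₀ z, hpz, fun x => ?_⟩
            rw [proj_mulVec]
            split
            · exact hp₀.1 x
            · exact le_refl 0
        obtain ⟨w, hwmem, hwne, hwpos⟩ := hw
        have hsum : 0 < ∑ x, w x := by
          obtain ⟨x, hx⟩ := Function.ne_iff.mp hwne
          exact Finset.sum_pos' (fun i _ => hwpos i)
            ⟨x, Finset.mem_univ x, lt_of_le_of_ne (hwpos x) (Ne.symm hx)⟩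
        refine ⟨(∑ x, w x)⁻¹ • w, ⟨fun x => mul_nonneg (inv_nonneg.mpr hsum.le) (hwpos x), ?_⟩,
          fun x hx => ?_, ?_⟩
        · simp only [Pi.smul_apply, smul_eq_mul, ← Finset.mul_sum]
          exact inv_mul_cancel₀ hsum.ne'
        · have h0 : w x = 0 := entrance_le_suppSpace φ T p₀ z hwmem x hx
          simp [h0]
        · have hσsum : ∑ x, ((∑ x, w x)⁻¹ • w) x = 1 := by
            simp only [Pi.smul_apply, smul_eq_mul, ← Finset.mul_sum]
            exact inv_mul_cancel₀ hsum.ne'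
          have hσmem : (∑ x, w x)⁻¹ • w ∈ entranceSpace φ T p₀ z :=
            Submodule.smul_mem _ _ hwmem
          have hσne : (∑ x, w x)⁻¹ • w ≠ 0 := by
            intro h
            rw [h] at hσsum
            simp at hσsum
          have hspan : Submodule.span ℝ {(∑ x, w x)⁻¹ • w} = entranceSpace φ T p₀ z := by
            apply Submodule.eq_of_le_of_finrank_le
            · rw [Submodule.span_le, Set.singleton_subset_iff]
              exact hσmem
            · rw [finrank_span_singleton hσne]
              exact hdim z
          exact hspan.ge
    choose σ hprob hsuppσ hspanσ using hex
    set S : Matrix X Z ℝ := Matrix.of fun x z => σ z x with hSdef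
    have hSsupp : ∀ z x, φ x ≠ z → S x z = 0 := fun z x hx => hsuppσ z x hx
    have hkey := key_mulVec φ S hSsupp
    have hmemc : ∀ (z : Z) (w : X → ℝ), w ∈ entranceSpace φ T p₀ z → w = (∑ x, w x) • σ z :=
      fun z w hw => eq_smul_of_mem_span ((hprob z).2) (hspanσ z hw)
    refine ⟨S, fun z => ⟨hprob z, ?_⟩, ?_, ?_⟩
    · funext x
      rw [proj_mulVec]
      by_cases hx : φ x = z
      · rw [if_pos hx]
      · rw [if_neg hx]
        exact (hSsupp z x hx).symm
    · funext x
      have h1 : (proj φ (φ x)).mulVec p₀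
          = (∑ x' ∈ Finset.univ.filter (fun x' => φ x' = φ x), p₀ x') • σ (φ x) := by
        rw [hmemc (φ x) _ (projp0_mem φ T p₀ (φ x)), sum_proj_mulVec]
      have h3 := congrFun h1 x
      rw [proj_mulVec, if_pos rfl] at h3
      have h2 : ((proj φ (φ x) * (S * featMat φ)).mulVec p₀) x = ((S * featMat φ).mulVec p₀) x := by
        rw [← Matrix.mulVec_mulVec, proj_mulVec, if_pos rfl]
      rw [← h2, hkey (φ x) p₀]
      exact h3
    · intro z u
      have hcol : ∀ v : X → ℝ, (proj φ z * T u * projPerp φ z).mulVec v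
          = (proj φ z * (S * featMat φ) * T u * projPerp φ z).mulVec v := by
        intro v
        have hmem : (proj φ z * T u * projPerp φ z).mulVec v ∈ entranceSpace φ T p₀ z :=
          Submodule.mem_sup_left (Submodule.mem_iSup_of_mem u ⟨v, rfl⟩)
        conv_rhs => rw [mul_assoc (proj φ z * (S * featMat φ)), ← Matrix.mulVec_mulVec, hkey z]
        have hmv : (proj φ z).mulVec ((T u * projPerp φ z).mulVec v)
            = (proj φ z * T u * projPerp φ z).mulVec v := by
          rw [Matrix.mulVec_mulVec, mul_assoc]
        have hsum : ∑ x' ∈ Finset.univ.filter (fun x' => φ x' = z),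
              (T u * projPerp φ z).mulVec v x'
            = ∑ x, (proj φ z * T u * projPerp φ z).mulVec v x := by
          rw [← sum_proj_mulVec φ z]
          exact Finset.sum_congr rfl fun x _ => congrFun hmv x
        rw [hsum]
        exact hmemc z _ hmem
      ext x' x
      have h := congrFun (hcol (Pi.single x 1)) x'
      simpa [Matrix.mulVec_single] using h
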